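/- A function f : ℝ → ℂ is almost periodic (every sequence of translates has a uniformly convergent subsequence) if and only if for all ε > 0 there exists l > 0 such that every interval (x, x+l) contains a number τ with |f(t+τ) − f(t)| < ε for all t ∈ ℝ. -/
import Mathlib

set_option maxHeartbeats 1000000
set_option synthInstance.maxHeartbeats 400000


open Filter

section Aux

variable (f : ℝ → ℂ)

/-- Bohr almost periodicity implies uniform continuity. -/
private lemma bohr_uc (hf : Continuous f)
    (h : ∀ ε > (0 : ℝ), ∃ l > (0 : ℝ), ∀ x : ℝ, ∃ τ ∈ Set.Ioo x (x + l),
      ∀ t : ℝ, ‖f (t + τ) - f t‖ < ε) :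
    UniformContinuous f := by
  rw [Metric.uniformContinuous_iff]
  intro ε hε
  obtain ⟨l, hl, hτ⟩ := h (ε / 3) (by linarith)
  have huc : UniformContinuousOn f (Set.Icc (-1 : ℝ) (l + 1)) :=
    isCompact_Icc.uniformContinuousOn_of_continuous hf.continuousOn
  rw [Metric.uniformContinuousOn_iff] at huc
  obtain ⟨δ, hδ, hδ'⟩ := huc (ε / 3) (by linarith)
  refine ⟨min δ 1, lt_min hδ one_pos, ?_⟩
  intro a b hab
  obtain ⟨τ, hτ1, hτ2⟩ := hτ (-a)
  have h1 : a + τ ∈ Set.Icc (-1 : ℝ) (l + 1) := by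
    constructor <;> [nlinarith [hτ1.1]; nlinarith [hτ1.2]]
  have hab1 : |a - b| < 1 := lt_of_lt_of_le (by simpa [Real.dist_eq] using hab) (min_le_right _ _)
  have hab1' : -1 < a - b ∧ a - b < 1 := abs_lt.mp hab1
  have h2 : b + τ ∈ Set.Icc (-1 : ℝ) (l + 1) := by
    constructor <;> [nlinarith [hτ1.1, hab1'.2]; nlinarith [hτ1.2, hab1'.1]]
  have hd : dist (a + τ) (b + τ) < δ := by
    have : dist (a + τ) (b + τ) = dist a b := by simp [Real.dist_eq]
    rw [this]; exact lt_of_lt_of_le hab (min_le_left _ _)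
  have hm : dist (f (a + τ)) (f (b + τ)) < ε / 3 := hδ' _ h1 _ h2 hd
  have ha' : dist (f a) (f (a + τ)) < ε / 3 := by
    rw [dist_eq_norm, ← norm_neg]; simpa using hτ2 a
  have hb' : dist (f (b + τ)) (f b) < ε / 3 := by
    rw [dist_eq_norm]; simpa using hτ2 b
  calc dist (f a) (f b) ≤ dist (f a) (f (a + τ)) + dist (f (a + τ)) (f (b + τ))
        + dist (f (b + τ)) (f b) := dist_triangle4 _ _ _ _
    _ < ε / 3 + ε / 3 + ε / 3 := by linarith
    _ = ε := by ring

/-- Bohr almost periodicity implies boundedness. -/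
private lemma bohr_bdd (hf : Continuous f)
    (h : ∀ ε > (0 : ℝ), ∃ l > (0 : ℝ), ∀ x : ℝ, ∃ τ ∈ Set.Ioo x (x + l),
      ∀ t : ℝ, ‖f (t + τ) - f t‖ < ε) :
    ∃ C : ℝ, 0 ≤ C ∧ ∀ t : ℝ, ‖f t‖ ≤ C := by
  obtain ⟨l, hl, hτ⟩ := h 1 one_pos
  obtain ⟨C0, hC0⟩ := isCompact_Icc.exists_bound_of_continuousOn
    (s := Set.Icc (0 : ℝ) l) hf.continuousOn
  refine ⟨max C0 0 + 1, by positivity, fun t => ?_⟩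
  obtain ⟨τ, hτ1, hτ2⟩ := hτ (-t)
  have h1 : t + τ ∈ Set.Icc (0 : ℝ) l := by
    constructor <;> [nlinarith [hτ1.1]; nlinarith [hτ1.2]]
  have : ‖f t‖ ≤ ‖f (t + τ)‖ + ‖f (t + τ) - f t‖ := by
    have heq : f t = f (t + τ) - (f (t + τ) - f t) := by ring
    have h6 := norm_sub_le (f (t + τ)) (f (t + τ) - f t)
    rw [← heq] at h6
    exact h6
  have h3 := hC0 _ h1
  have h4 := hτ2 t
  have h5 : C0 ≤ max C0 0 := le_max_left _ _
  linarith

end Aux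

/-- Bochner almost periodicity: every sequence of translates has a subsequence
converging uniformly on `ℝ`. -/
def AlmostPeriodic (f : ℝ → ℂ) : Prop :=
  ∀ t : ℕ → ℝ, ∃ φ : ℕ → ℕ, StrictMono φ ∧
    ∃ g : ℝ → ℂ, TendstoUniformly (fun k x => f (x + t (φ k))) g atTop

/-- Bochner almost periodicity is equivalent to the Bohr definition: the set of
`ε`-translation numbers is relatively dense. -/
theorem stmt_1 (f : ℝ → ℂ) (hf : Continuous f) :
    AlmostPeriodic f ↔
      ∀ ε > (0 : ℝ), ∃ l > (0 : ℝ), ∀ x : ℝ, ∃ τ ∈ Set.Ioo x (x + l),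
        ∀ t : ℝ, ‖f (t + τ) - f t‖ < ε := by
  constructor
  · -- Bochner → Bohr, by contradiction
    intro hap
    by_contra hbohr
    push_neg at hbohr
    obtain ⟨ε, hε, hbad⟩ := hbohr
    -- construct a sequence whose pairwise differences are not ε-translation numbers
    -- g n = (t n, B n) where B n bounds |t i| for i ≤ n
    set g : ℕ → ℝ × ℝ := fun n => Nat.rec ((0 : ℝ), (0 : ℝ)) (fun _ p =>
      let x := Classical.choose (hbad (2 * (|p.2| + 1)) (by positivity))
      (x + |p.2| + 1, max p.2 |x + |p.2| + 1|)) n with hg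
    have hgsucc : ∀ n, g (n + 1) =
        (Classical.choose (hbad (2 * (|(g n).2| + 1)) (by positivity)) + |(g n).2| + 1,
         max (g n).2 |Classical.choose (hbad (2 * (|(g n).2| + 1)) (by positivity))
            + |(g n).2| + 1|) := fun n => rfl
    set t : ℕ → ℝ := fun n => (g n).1 with ht
    set B : ℕ → ℝ := fun n => (g n).2 with hB
    have hBsucc : ∀ k, B (k + 1) = max (B k) |t (k + 1)| := by
      intro k
      show (g (k + 1)).2 = max (g k).2 |(g (k + 1)).1|
      rw [hgsucc k]
    have hB0 : ∀ n, 0 ≤ B n := by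
      intro n
      induction n with
      | zero => simp [hB, hg]
      | succ k ih =>
        rw [hBsucc k]; exact le_trans ih (le_max_left _ _)
    have habs : ∀ n, |B n| = B n := fun n => abs_of_nonneg (hB0 n)
    have htB : ∀ i n, i ≤ n → |t i| ≤ B n := by
      intro i n hin
      induction n with
      | zero =>
        interval_cases i
        simp [ht, hB, hg]
      | succ k ih =>
        rcases Nat.lt_or_ge i (k + 1) with h | h
        · exact le_trans (ih (Nat.lt_succ_iff.mp h)) (by rw [hBsucc k]; exact le_max_left _ _)
        · have : i = k + 1 := le_antisymm hin h
          rw [this, hBsucc k]; exact le_max_right _ _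
    have key : ∀ m n, m < n → ∃ s : ℝ, ε ≤ ‖f (s + (t n - t m)) - f s‖ := by
      intro m n hmn
      obtain ⟨k, rfl⟩ : ∃ k, n = k + 1 := ⟨n - 1, by omega⟩
      have hm : m ≤ k := Nat.lt_succ_iff.mp hmn
      set x := Classical.choose (hbad (2 * (|B k| + 1)) (by positivity)) with hx
      have hspec := Classical.choose_spec (hbad (2 * (|B k| + 1)) (by positivity))
      have htval : t (k + 1) = x + |B k| + 1 := by
        show (g (k + 1)).1 = x + |B k| + 1
        rw [hgsucc k]
      have hmem : t (k + 1) - t m ∈ Set.Ioo x (x + 2 * (|B k| + 1)) := by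
        have h1 := htB m k hm
        have h2 := abs_le.mp h1
        rw [htval, habs k] at *
        constructor <;> [nlinarith [h2.2]; nlinarith [h2.1]]
      obtain ⟨s, hs⟩ := hspec _ hmem
      exact ⟨s, hs⟩
    obtain ⟨φ, hφ, g', hunif⟩ := hap t
    rw [Metric.tendstoUniformly_iff] at hunif
    obtain ⟨N, hN⟩ := eventually_atTop.mp (hunif (ε / 2) (by linarith))
    have hmn : φ N < φ (N + 1) := hφ (Nat.lt_succ_self N)
    obtain ⟨s, hs⟩ := key (φ N) (φ (N + 1)) hmn
    set u := s - t (φ N) with hu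
    have e1 : s + (t (φ (N + 1)) - t (φ N)) = u + t (φ (N + 1)) := by rw [hu]; ring
    have e2 : s = u + t (φ N) := by rw [hu]; ring
    have h1 := hN N le_rfl u
    have h2 := hN (N + 1) (Nat.le_succ N) u
    have htri : dist (f (u + t (φ (N + 1)))) (f (u + t (φ N)))
        ≤ dist (g' u) (f (u + t (φ (N + 1)))) + dist (g' u) (f (u + t (φ N))) :=
      dist_triangle_left _ _ _
    have : ε ≤ dist (f (u + t (φ (N + 1)))) (f (u + t (φ N))) := by
      rw [dist_eq_norm, ← e1, ← e2]; exact hs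
    linarith
  · -- Bohr → Bochner
    intro h t
    obtain ⟨C, hC0, hC⟩ := bohr_bdd f hf h
    have huc : UniformContinuous f := bohr_uc f hf h
    set Φ : ℝ → BoundedContinuousFunction ℝ ℂ := fun s =>
      BoundedContinuousFunction.ofNormedAddCommGroup (fun x => f (x + s))
        (hf.comp (continuous_id.add continuous_const)) C (fun x => hC (x + s)) with hΦ
    have hΦapp : ∀ s x, Φ s x = f (x + s) := fun s x => rfl
    have hΦcont : Continuous Φ := by
      rw [Metric.continuous_iff]
      intro b ε hε
      rw [Metric.uniformContinuous_iff] at huc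
      obtain ⟨δ, hδ, hδ'⟩ := huc (ε / 2) (by linarith)
      refine ⟨δ, hδ, fun a hab => ?_⟩
      have : dist (Φ a) (Φ b) ≤ ε / 2 := by
        refine BoundedContinuousFunction.dist_le (by linarith) |>.mpr fun x => ?_
        have : dist (x + a) (x + b) < δ := by simpa [Real.dist_eq] using hab
        exact le_of_lt (hδ' this)
      linarith
    have htb : TotallyBounded (Set.range Φ) := by
      rw [Metric.totallyBounded_iff]
      intro ε hε
      obtain ⟨l, hl, hτ⟩ := h (ε / 2) (by linarith)
      have hK : IsCompact (Φ '' Set.Icc 0 l) := (isCompact_Icc.image hΦcont)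
      obtain ⟨F, hFfin, hFcov⟩ := Metric.totallyBounded_iff.mp hK.totallyBounded
        (ε / 2) (by linarith)
      refine ⟨F, hFfin, ?_⟩
      rintro _ ⟨a, rfl⟩
      obtain ⟨τ, hτ1, hτ2⟩ := hτ (-a)
      have hmem : a + τ ∈ Set.Icc (0 : ℝ) l := by
        constructor <;> [nlinarith [hτ1.1]; nlinarith [hτ1.2]]
      have hd : dist (Φ a) (Φ (a + τ)) ≤ ε / 2 := by
        refine BoundedContinuousFunction.dist_le (by linarith) |>.mpr fun x => ?_
        rw [hΦapp, hΦapp, dist_eq_norm, ← norm_neg]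
        have := hτ2 (x + a)
        have heq : x + (a + τ) = x + a + τ := by ring
        rw [heq]
        simpa using le_of_lt this
      obtain ⟨y, hyF, hy⟩ := Set.mem_iUnion₂.mp (hFcov ⟨a + τ, hmem, rfl⟩)
      refine Set.mem_iUnion₂.mpr ⟨y, hyF, ?_⟩
      rw [Metric.mem_ball] at hy ⊢
      calc dist (Φ a) y ≤ dist (Φ a) (Φ (a + τ)) + dist (Φ (a + τ)) y := dist_triangle _ _ _
        _ < ε / 2 + ε / 2 := by linarith
        _ = ε := by ring
    have hcompact : IsCompact (closure (Set.range Φ)) :=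
      TotallyBounded.isCompact_of_isClosed htb.closure isClosed_closure
    have hseq := hcompact.isSeqCompact (x := fun n => Φ (t n))
      (fun n => subset_closure (Set.mem_range_self _))
    obtain ⟨a, _, φ, hφ, htend⟩ := hseq
    refine ⟨φ, hφ, ⇑a, ?_⟩
    have := BoundedContinuousFunction.tendsto_iff_tendstoUniformly.mp htend
    exact this
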